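/- arXiv:2312.15879 — 2 statements merged into one kernel-verified Lean document; each statement's English description precedes it below -/
import Mathlib

section
/- Suppose c > 0, a ≤ c, b ≤ c, and ab ≤ 0. Then the function r ↦ F(a, b; c; r) is decreasing on the interval (0, 1). -/
open Real

/-- Pochhammer symbol `(a)_k = Γ(a+k)/Γ(a)`. -/
noncomputable def Poch (a : ℝ) (k : ℕ) : ℝ := Real.Gamma (a + k) / Real.Gamma a

/-- Gauss hypergeometric function `F(a,b;c;x)`. -/
noncomputable def Hyp (a b c x : ℝ) : ℝ :=
  ∑' k : ℕ, Poch a k * Poch b k / Poch c k * x ^ k / (Nat.factorial k : ℝ)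


noncomputable def pp (a : ℝ) (k : ℕ) : ℝ := ∏ j ∈ Finset.range k, (a + j)

lemma pp_succ (a : ℝ) (k : ℕ) : pp a (k + 1) = pp a k * (a + k) := Finset.prod_range_succ _ _

lemma pp_zero (a : ℝ) : pp a 0 = 1 := rfl

lemma pp_shift (a : ℝ) (k : ℕ) : pp a (k + 1) = a * pp (a + 1) k := by
  induction k with
  | zero => simp [pp_succ, pp_zero]
  | succ m ih =>
      rw [pp_succ, ih, pp_succ]
      push_cast
      ring

/-- ratio test helper for nonnegative sequences -/
lemma summable_of_ratio_nonneg {f : ℕ → ℝ} (hf : ∀ k, 0 ≤ f k) {c : ℝ} (hc : c < 1)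
    (h : ∀ᶠ k in Filter.atTop, f (k + 1) ≤ c * f k) : Summable f := by
  refine summable_of_ratio_norm_eventually_le hc ?_
  filter_upwards [h] with k hk
  rwa [Real.norm_eq_abs, Real.norm_eq_abs, abs_of_nonneg (hf _), abs_of_nonneg (hf _)]

lemma eventually_ratio (a r : ℝ) (hr0 : 0 ≤ r) (hr : r < 1) :
    ∀ᶠ k : ℕ in Filter.atTop, |a + k| * r / (k + 1) ≤ (r + 1) / 2 := by
  obtain ⟨K, hK⟩ := exists_nat_gt (|a| * r / ((r + 1) / 2 - r))
  filter_upwards [Filter.eventually_ge_atTop K] with k hk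
  have hkK : (K : ℝ) ≤ k := by exact_mod_cast hk
  have hpos : (0:ℝ) < (r + 1) / 2 - r := by linarith
  have h1 : |a + k| ≤ |a| + k := by
    calc |a + (k:ℝ)| ≤ |a| + |(k:ℝ)| := abs_add_le _ _
    _ = |a| + k := by rw [abs_of_nonneg (by positivity : (0:ℝ) ≤ ((k:ℕ):ℝ))]
  have hak : |a| * r ≤ ((r + 1) / 2 - r) * k := by
    have hK' : |a| * r / ((r + 1) / 2 - r) ≤ (k:ℝ) := le_of_lt (hK.trans_le hkK)
    rw [div_le_iff₀ hpos] at hK'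
    nlinarith
  rw [div_le_iff₀ (by positivity)]
  have h2 : |a + k| * r ≤ (|a| + k) * r := by nlinarith
  nlinarith [Nat.cast_nonneg (α := ℝ) k]

/-- Summability of the pochhammer exponential-type series. -/
lemma summableA (a : ℝ) {r : ℝ} (hr0 : 0 ≤ r) (hr : r < 1) :
    Summable fun k : ℕ => |pp a k| / (Nat.factorial k : ℝ) * r ^ k := by
  refine summable_of_ratio_nonneg (fun k => by positivity) (c := (r + 1) / 2) (by linarith) ?_
  filter_upwards [eventually_ratio a r hr0 hr] with k hk
  have hfac : ((Nat.factorial (k+1) : ℕ) : ℝ) = ((k:ℝ) + 1) * (Nat.factorial k : ℝ) := by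
    push_cast [Nat.factorial_succ]; ring
  have h1 : |pp a (k+1)| = |pp a k| * |a + k| := by rw [pp_succ, abs_mul]
  have hfk : (0:ℝ) < (Nat.factorial k : ℝ) := by exact_mod_cast Nat.factorial_pos k
  have key : |pp a (k+1)| / (Nat.factorial (k+1) : ℝ) * r ^ (k+1)
      = (|pp a k| / (Nat.factorial k : ℝ) * r ^ k) * (|a + k| * r / ((k:ℝ) + 1)) := by
    rw [h1, hfac, pow_succ]
    field_simp
  rw [key, mul_comm ((r+1)/2) _]
  exact mul_le_mul_of_nonneg_left hk (by positivity)

/-- Summability of the termwise-differentiated series. -/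
lemma summableB (a : ℝ) {r : ℝ} (hr0 : 0 ≤ r) (hr : r < 1) :
    Summable fun k : ℕ => |pp a k| * ((k : ℝ) * r ^ (k - 1)) / (Nat.factorial k : ℝ) := by
  rw [← summable_nat_add_iff 1]
  have h : (fun k : ℕ => |pp a (k+1)| * (((k+1 : ℕ) : ℝ) * r ^ (k + 1 - 1)) / (Nat.factorial (k+1) : ℝ))
      = fun k : ℕ => |a| * (|pp (a+1) k| / (Nat.factorial k : ℝ) * r ^ k) := by
    funext k
    have hfac : ((Nat.factorial (k+1) : ℕ) : ℝ) = ((k:ℝ) + 1) * (Nat.factorial k : ℝ) := by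
      push_cast [Nat.factorial_succ]; ring
    have hfk : (0:ℝ) < (Nat.factorial k : ℝ) := by exact_mod_cast Nat.factorial_pos k
    rw [pp_shift, abs_mul, hfac]
    push_cast
    field_simp
  rw [h]
  exact ((summableA (a+1) hr0 hr).mul_left _)
noncomputable def gfun (a x : ℝ) : ℝ := ∑' k : ℕ, pp a k * x ^ k / (Nat.factorial k : ℝ)

lemma summable_gterm (a : ℝ) {x : ℝ} (hx : |x| < 1) :
    Summable fun k : ℕ => pp a k * x ^ k / (Nat.factorial k : ℝ) := by
  refine Summable.of_norm_bounded (summableA a (abs_nonneg x) hx) fun k => ?_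
  rw [Real.norm_eq_abs, abs_div, abs_mul, abs_pow]
  rw [abs_of_nonneg (by positivity : (0:ℝ) ≤ (Nat.factorial k : ℝ))]
  rw [div_mul_eq_mul_div]

noncomputable def gder (a x : ℝ) : ℝ :=
  ∑' k : ℕ, pp a k * ((k : ℝ) * x ^ (k - 1)) / (Nat.factorial k : ℝ)

lemma summable_gder (a : ℝ) {x : ℝ} (hx : |x| < 1) :
    Summable fun k : ℕ => pp a k * ((k : ℝ) * x ^ (k - 1)) / (Nat.factorial k : ℝ) := by
  refine Summable.of_norm_bounded (summableB a (abs_nonneg x) hx) fun k => ?_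
  rw [Real.norm_eq_abs, abs_div, abs_mul, abs_mul, abs_pow]
  rw [abs_of_nonneg (by positivity : (0:ℝ) ≤ (Nat.factorial k : ℝ)),
    abs_of_nonneg (by positivity : (0:ℝ) ≤ ((k:ℕ):ℝ))]

lemma hasDerivAt_gfun (a : ℝ) {x : ℝ} (hx : |x| < 1) :
    HasDerivAt (gfun a) (gder a x) x := by
  set ρ : ℝ := (|x| + 1) / 2 with hρ
  have hρ0 : 0 ≤ ρ := by positivity
  have hρ1 : ρ < 1 := by rw [hρ]; linarith
  have hxρ : |x| < ρ := by rw [hρ]; linarith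
  have hopen : IsOpen (Metric.ball (0:ℝ) ρ) := Metric.isOpen_ball
  have hmem : x ∈ Metric.ball (0:ℝ) ρ := by
    simpa [Real.dist_eq] using hxρ
  refine hasDerivAt_of_tendstoUniformlyOn (f := fun (n : ℕ) (y : ℝ) =>
      ∑ k ∈ Finset.range n, pp a k * y ^ k / (Nat.factorial k : ℝ))
    (f' := fun (n : ℕ) (y : ℝ) =>
      ∑ k ∈ Finset.range n, pp a k * ((k : ℝ) * y ^ (k - 1)) / (Nat.factorial k : ℝ)) hopen
    (tendstoUniformlyOn_tsum_nat (summableB a hρ0 hρ1) fun k y hy => ?_) ?_ ?_ hmem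
  · have hyρ : |y| ≤ ρ := by
      have := mem_ball_iff_norm.mp hy
      simp only [sub_zero, Real.norm_eq_abs] at this
      exact le_of_lt this
    rw [Real.norm_eq_abs, abs_div, abs_mul, abs_mul, abs_pow]
    rw [abs_of_nonneg (by positivity : (0:ℝ) ≤ (Nat.factorial k : ℝ)),
      abs_of_nonneg (by positivity : (0:ℝ) ≤ ((k:ℕ):ℝ))]
    gcongr
  · refine Filter.Eventually.of_forall fun n y _ => ?_
    have : ∀ k ∈ Finset.range n, HasDerivAt (fun z : ℝ => pp a k * z ^ k / (Nat.factorial k : ℝ))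
        (pp a k * ((k : ℝ) * y ^ (k - 1)) / (Nat.factorial k : ℝ)) y := fun k _ =>
      ((hasDerivAt_pow k y).const_mul (pp a k)).div_const _
    simpa using HasDerivAt.fun_sum this
  · intro y hy
    have hyρ : |y| < 1 := by
      have := mem_ball_iff_norm.mp hy
      simp only [sub_zero, Real.norm_eq_abs] at this
      exact this.trans hρ1
    exact (summable_gterm a hyρ).hasSum.tendsto_sum_nat

lemma gfun_zero (a : ℝ) : gfun a 0 = 1 := by
  rw [gfun, tsum_eq_single 0]
  · simp [pp_zero]
  · intro k hk
    obtain ⟨m, rfl⟩ := Nat.exists_eq_succ_of_ne_zero hk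
    simp [zero_pow]

lemma key_identity (a : ℝ) {y : ℝ} (hy : |y| < 1) :
    (1 - y) * gder a y = a * gfun a y := by
  have SD := summable_gder a hy
  have SA := summable_gterm a hy
  -- y * gder = ∑ k * pp a k * y^k / k!
  have hyD : y * gder a y = ∑' k : ℕ, (k : ℝ) * pp a k * y ^ k / (Nat.factorial k : ℝ) := by
    rw [gder, ← tsum_mul_left]
    refine tsum_congr fun k => ?_
    cases k with
    | zero => simp
    | succ m =>
        rw [Nat.add_sub_cancel]
        field_simp
        ring
  -- gder = ∑ pp a (k+1) * y^k / k!
  have hshift : gder a y = ∑' k : ℕ, pp a (k + 1) * y ^ k / (Nat.factorial k : ℝ) := by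
    rw [gder, Summable.tsum_eq_zero_add SD]
    simp only [Nat.cast_zero, zero_mul, mul_zero, zero_div, zero_add, pow_zero]
    refine tsum_congr fun k => ?_
    have hfac : ((Nat.factorial (k+1) : ℕ) : ℝ) = ((k:ℝ) + 1) * (Nat.factorial k : ℝ) := by
      push_cast [Nat.factorial_succ]; ring
    have hfk : (0:ℝ) < (Nat.factorial k : ℝ) := by exact_mod_cast Nat.factorial_pos k
    rw [Nat.add_sub_cancel, hfac]
    push_cast
    field_simp
  have Sshift : Summable fun k : ℕ => pp a (k + 1) * y ^ k / (Nat.factorial k : ℝ) := by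
    have := (summable_nat_add_iff 1).mpr SD
    refine this.congr fun k => ?_
    have hfac : ((Nat.factorial (k+1) : ℕ) : ℝ) = ((k:ℝ) + 1) * (Nat.factorial k : ℝ) := by
      push_cast [Nat.factorial_succ]; ring
    have hfk : (0:ℝ) < (Nat.factorial k : ℝ) := by exact_mod_cast Nat.factorial_pos k
    rw [Nat.add_sub_cancel, hfac]
    push_cast
    field_simp
  have SyD : Summable fun k : ℕ => (k : ℝ) * pp a k * y ^ k / (Nat.factorial k : ℝ) := by
    refine SD.mul_left y |>.congr fun k => ?_
    cases k with
    | zero => simp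
    | succ m =>
        rw [Nat.add_sub_cancel]
        field_simp
        ring
  calc (1 - y) * gder a y = gder a y - y * gder a y := by ring
  _ = (∑' k : ℕ, pp a (k + 1) * y ^ k / (Nat.factorial k : ℝ))
      - ∑' k : ℕ, (k : ℝ) * pp a k * y ^ k / (Nat.factorial k : ℝ) := by rw [← hyD, ← hshift]
  _ = ∑' k : ℕ, (pp a (k + 1) * y ^ k / (Nat.factorial k : ℝ)
      - (k : ℝ) * pp a k * y ^ k / (Nat.factorial k : ℝ)) := (Summable.tsum_sub Sshift SyD).symm
  _ = ∑' k : ℕ, a * (pp a k * y ^ k / (Nat.factorial k : ℝ)) := by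
      refine tsum_congr fun k => ?_
      rw [pp_succ]
      field_simp
      ring
  _ = a * gfun a y := by rw [tsum_mul_left, gfun]

lemma gfun_eq (a : ℝ) {x : ℝ} (hx0 : 0 ≤ x) (hx1 : x < 1) :
    gfun a x = (1 - x) ^ (-a) := by
  have hkey : ∀ y ∈ Set.Icc (0:ℝ) x, gfun a y * (1 - y) ^ a = 1 := by
    intro y hy
    have hy1 : ∀ z ∈ Set.Icc (0:ℝ) x, |z| < 1 := fun z hz => by
      rw [abs_of_nonneg hz.1]; exact lt_of_le_of_lt hz.2 hx1
    have hcont : ContinuousOn (fun z => gfun a z * (1 - z) ^ a) (Set.Icc 0 x) := by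
      intro z hz
      have h1 : ContinuousAt (gfun a) z := (hasDerivAt_gfun a (hy1 z hz)).continuousAt
      have h2 : ContinuousAt (fun z : ℝ => (1 - z) ^ a) z := by
        have hz1 : (1:ℝ) - z ≠ 0 := by
          have := hy1 z hz
          rw [abs_lt] at this
          linarith [this.2]
        exact ((continuous_const.sub continuous_id).continuousAt).rpow_const (Or.inl hz1)
      exact (h1.mul h2).continuousWithinAt
    have hderiv : ∀ z ∈ Set.Ico (0:ℝ) x, HasDerivWithinAt
        (fun z => gfun a z * (1 - z) ^ a) 0 (Set.Ici z) z := by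
      intro z hz
      have hz' : |z| < 1 := hy1 z ⟨hz.1, le_of_lt hz.2⟩
      have hz1 : (0:ℝ) < 1 - z := by
        rw [abs_lt] at hz'; linarith [hz'.2]
      have h1 : HasDerivAt (gfun a) (gder a z) z := hasDerivAt_gfun a hz'
      have h2 : HasDerivAt (fun z : ℝ => (1 - z) ^ a) (-1 * a * (1 - z) ^ (a - 1)) z := by
        have hin : HasDerivAt (fun z : ℝ => 1 - z) (-1) z := by
          simpa using (hasDerivAt_id z).const_sub 1
        exact hin.rpow_const (Or.inl (ne_of_gt hz1))
      have h3 := h1.mul h2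
      have hzero : gder a z * (1 - z) ^ a + gfun a z * (-1 * a * (1 - z) ^ (a - 1)) = 0 := by
        have e : (1 - z) ^ a = (1 - z) ^ (a - 1) * (1 - z) := by
          rw [← Real.rpow_add_one (ne_of_gt hz1)]
          ring_nf
        rw [e]
        have hki := key_identity a hz'
        linear_combination ((1 - z) ^ (a - 1)) * hki
      rw [hzero] at h3
      exact h3.hasDerivWithinAt
    have := constant_of_has_deriv_right_zero hcont hderiv y hy
    simpa [gfun_zero] using this
  have h1x : (0:ℝ) < 1 - x := by linarith
  have := hkey x ⟨hx0, le_rfl⟩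
  have hne : (1 - x) ^ a ≠ 0 := ne_of_gt (Real.rpow_pos_of_pos h1x a)
  rw [Real.rpow_neg (le_of_lt h1x)]
  field_simp at this ⊢
  linarith [this]
lemma Gamma_ne_zero' {z : ℝ} (hz : ∀ m : ℕ, z ≠ -(m:ℝ)) : Real.Gamma z ≠ 0 := by
  intro h
  obtain ⟨m, hm⟩ := (Real.Gamma_eq_zero_iff z).mp h
  exact hz m hm

lemma Poch_eq_pp {z : ℝ} (hz : ∀ m : ℕ, z ≠ -(m:ℝ)) (k : ℕ) : Poch z k = pp z k := by
  have hΓ : Real.Gamma z ≠ 0 := Gamma_ne_zero' hz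
  induction k with
  | zero => simp [Poch, pp_zero, div_self hΓ]
  | succ m ih =>
      have hzm : z + (m:ℝ) ≠ 0 := by
        intro h
        exact hz m (by linarith)
      have hcast : z + ((m+1 : ℕ):ℝ) = (z + (m:ℝ)) + 1 := by push_cast; ring
      rw [Poch, hcast, Real.Gamma_add_one hzm, pp_succ, ← ih, Poch]
      ring

lemma Poch_pos {z : ℝ} (hz : 0 < z) (k : ℕ) : 0 < Poch z k :=
  div_pos (Real.Gamma_pos_of_pos (by positivity)) (Real.Gamma_pos_of_pos hz)

lemma beta_integrable {u v : ℝ} (hu : 0 < u) (hv : 0 < v) :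
    MeasureTheory.IntegrableOn (fun t : ℝ => t ^ (u-1) * (1-t) ^ (v-1)) (Set.Ioo 0 1) := by
  have h := (Complex.betaIntegral_convergent (u := (u:ℂ)) (v := (v:ℂ))
    (by simpa using hu) (by simpa using hv)).norm
  have h2 : MeasureTheory.IntegrableOn
      (fun t : ℝ => ‖(t:ℂ) ^ ((u:ℂ)-1) * ((1:ℂ)-(t:ℂ)) ^ ((v:ℂ)-1)‖) (Set.Ioo 0 1) := by
    have := (intervalIntegrable_iff_integrableOn_Ioc_of_le (by norm_num : (0:ℝ) ≤ 1)).mp h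
    exact this.mono_set Set.Ioo_subset_Ioc_self
  refine (h2.congr_fun (fun t ht => ?_) measurableSet_Ioo)
  have ht0 : 0 < t := ht.1
  have ht1 : 0 < 1 - t := by linarith [ht.2]
  show ‖_ * _‖ = _
  rw [norm_mul]
  have e1 : ‖(t:ℂ) ^ ((u:ℂ)-1)‖ = t ^ (u-1) := by
    rw [Complex.norm_cpow_eq_rpow_re_of_pos ht0]
    norm_num
  have e2 : ‖((1:ℂ)-(t:ℂ)) ^ ((v:ℂ)-1)‖ = (1-t) ^ (v-1) := by
    have : ((1:ℂ) - (t:ℂ)) = (((1-t : ℝ)):ℂ) := by push_cast; ring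
    rw [this, Complex.norm_cpow_eq_rpow_re_of_pos ht1]
    norm_num
  rw [e1, e2]

lemma beta_value {u v : ℝ} (hu : 0 < u) (hv : 0 < v) :
    ∫ t in Set.Ioo (0:ℝ) 1, t ^ (u-1) * (1-t) ^ (v-1)
      = Real.Gamma u * Real.Gamma v / Real.Gamma (u+v) := by
  have h := Complex.Gamma_mul_Gamma_eq_betaIntegral (s := (u:ℂ)) (t := (v:ℂ))
    (by simpa using hu) (by simpa using hv)
  have hcoe : Complex.betaIntegral (u:ℂ) (v:ℂ)
      = ((∫ t in Set.Ioo (0:ℝ) 1, t ^ (u-1) * (1-t) ^ (v-1) : ℝ) : ℂ) := by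
    rw [Complex.betaIntegral, intervalIntegral.integral_of_le (by norm_num : (0:ℝ) ≤ 1),
      MeasureTheory.integral_Ioc_eq_integral_Ioo]
    rw [show (∫ t in Set.Ioo (0:ℝ) 1, (t:ℂ) ^ ((u:ℂ)-1) * ((1:ℂ)-(t:ℂ)) ^ ((v:ℂ)-1))
        = ∫ t in Set.Ioo (0:ℝ) 1, ((t ^ (u-1) * (1-t) ^ (v-1) : ℝ) : ℂ) from
      MeasureTheory.setIntegral_congr_fun measurableSet_Ioo fun t ht => ?_]
    · exact integral_ofReal
    · have ht0 : (0:ℝ) ≤ t := le_of_lt ht.1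
      have ht1 : (0:ℝ) ≤ 1 - t := by linarith [ht.2]
      have eu : ((u:ℂ) - 1) = ((u - 1 : ℝ) : ℂ) := by push_cast; ring
      have ev : ((v:ℂ) - 1) = ((v - 1 : ℝ) : ℂ) := by push_cast; ring
      have e1t : ((1:ℂ) - (t:ℂ)) = ((1 - t : ℝ) : ℂ) := by push_cast; ring
      rw [eu, ev, e1t, ← Complex.ofReal_cpow ht0, ← Complex.ofReal_cpow ht1]
      norm_cast
  rw [hcoe] at h
  have h2 : ((Real.Gamma u * Real.Gamma v : ℝ) : ℂ)
      = ((Real.Gamma (u+v) * ∫ t in Set.Ioo (0:ℝ) 1, t ^ (u-1) * (1-t) ^ (v-1) : ℝ) : ℂ) := by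
    push_cast
    rw [← Complex.Gamma_ofReal, ← Complex.Gamma_ofReal, ← Complex.Gamma_ofReal]
    push_cast
    exact h
  have h3 := Complex.ofReal_inj.mp h2
  have hne : Real.Gamma (u+v) ≠ 0 := ne_of_gt (Real.Gamma_pos_of_pos (by positivity))
  field_simp
  linarith [h3]
lemma Hyp_repr {a b c x : ℝ} (ha : ∀ m : ℕ, a ≠ -(m:ℝ)) (hb : 0 < b) (hbc : b < c)
    (hx0 : 0 < x) (hx1 : x < 1) :
    Hyp a b c x = Real.Gamma c / (Real.Gamma b * Real.Gamma (c - b)) *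
      ∫ t in Set.Ioo (0:ℝ) 1, t ^ (b-1) * (1-t) ^ (c-b-1) * (1 - x*t) ^ (-a) := by
  have hc : 0 < c := hb.trans hbc
  have hcb : 0 < c - b := by linarith
  set C := Real.Gamma c / (Real.Gamma b * Real.Gamma (c - b)) with hC
  set φ : ℕ → ℝ → ℝ := fun k t => (pp a k * x ^ k / (Nat.factorial k : ℝ)) *
      (t ^ ((b + (k:ℝ)) - 1) * (1 - t) ^ ((c - b) - 1)) with hφ
  have hψint : ∀ k : ℕ, MeasureTheory.IntegrableOn
      (fun t : ℝ => t ^ ((b + (k:ℝ)) - 1) * (1 - t) ^ ((c - b) - 1)) (Set.Ioo 0 1) :=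
    fun k => beta_integrable (by positivity) hcb
  have hφint : ∀ k : ℕ, MeasureTheory.IntegrableOn (φ k) (Set.Ioo 0 1) := fun k =>
    (hψint k).const_mul _
  have hψnonneg : ∀ k : ℕ, ∀ t ∈ Set.Ioo (0:ℝ) 1,
      0 ≤ t ^ ((b + (k:ℝ)) - 1) * (1 - t) ^ ((c - b) - 1) := by
    intro k t ht
    have h1 : (0:ℝ) ≤ t := le_of_lt ht.1
    have h2 : (0:ℝ) ≤ 1 - t := by linarith [ht.2]
    exact mul_nonneg (Real.rpow_nonneg h1 _) (Real.rpow_nonneg h2 _)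
  have hψval : ∀ k : ℕ, (∫ t in Set.Ioo (0:ℝ) 1, t ^ ((b + (k:ℝ)) - 1) * (1-t) ^ ((c-b) - 1))
      = Real.Gamma (b + k) * Real.Gamma (c - b) / Real.Gamma (c + k) := by
    intro k
    rw [beta_value (by positivity : (0:ℝ) < b + k) hcb]
    have : b + (k:ℝ) + (c - b) = c + k := by ring
    rw [this]
  -- Step A
  have hA : Hyp a b c x = ∑' k : ℕ, C * ∫ t in Set.Ioo (0:ℝ) 1, φ k t := by
    rw [Hyp]
    refine tsum_congr fun k => ?_
    have : (∫ t in Set.Ioo (0:ℝ) 1, φ k t)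
        = (pp a k * x ^ k / (Nat.factorial k : ℝ)) *
          (Real.Gamma (b + k) * Real.Gamma (c - b) / Real.Gamma (c + k)) := by
      rw [hφ]
      rw [MeasureTheory.integral_const_mul]
      rw [hψval k]
    rw [this, Poch_eq_pp ha, Poch, Poch]
    have h1 : Real.Gamma b ≠ 0 := ne_of_gt (Real.Gamma_pos_of_pos hb)
    have h2 : Real.Gamma c ≠ 0 := ne_of_gt (Real.Gamma_pos_of_pos hc)
    have h3 : Real.Gamma (c + k) ≠ 0 := ne_of_gt (Real.Gamma_pos_of_pos (by positivity))
    have h4 : Real.Gamma (c - b) ≠ 0 := ne_of_gt (Real.Gamma_pos_of_pos hcb)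
    have h5 : (0:ℝ) < (Nat.factorial k : ℝ) := by exact_mod_cast Nat.factorial_pos k
    rw [hC]
    field_simp
  -- Step B
  have hB : (∑' k : ℕ, ∫ t in Set.Ioo (0:ℝ) 1, φ k t)
      = ∫ t in Set.Ioo (0:ℝ) 1, ∑' k, φ k t := by
    refine MeasureTheory.integral_tsum_of_summable_integral_norm hφint ?_
    have hval : ∀ k : ℕ, (∫ t in Set.Ioo (0:ℝ) 1, ‖φ k t‖)
        = (|pp a k| / (Nat.factorial k : ℝ) * x ^ k) *
          ∫ t in Set.Ioo (0:ℝ) 1, t ^ ((b + (k:ℝ)) - 1) * (1-t) ^ ((c-b) - 1) := by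
      intro k
      rw [← MeasureTheory.integral_const_mul]
      refine MeasureTheory.setIntegral_congr_fun measurableSet_Ioo fun t ht => ?_
      simp only [hφ, norm_mul, Real.norm_eq_abs]
      rw [abs_of_nonneg (Real.rpow_nonneg (le_of_lt ht.1) _),
        abs_of_nonneg (Real.rpow_nonneg (by linarith [ht.2] : (0:ℝ) ≤ 1 - t) _),
        abs_div, abs_mul, abs_pow, abs_of_nonneg (le_of_lt hx0),
        abs_of_nonneg (by positivity : (0:ℝ) ≤ (Nat.factorial k : ℝ))]
      ring
    set M : ℝ := ∫ t in Set.Ioo (0:ℝ) 1, t ^ (b - 1) * (1-t) ^ ((c-b) - 1) with hM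
    refine Summable.of_nonneg_of_le
      (fun k => MeasureTheory.integral_nonneg fun t => norm_nonneg _) (fun k => ?_)
      (((summableA a (le_of_lt hx0) hx1).mul_right M))
    rw [hval k]
    have hIk : (∫ t in Set.Ioo (0:ℝ) 1, t ^ ((b + (k:ℝ)) - 1) * (1-t) ^ ((c-b) - 1)) ≤ M := by
      rw [hM]
      refine MeasureTheory.setIntegral_mono_on (hψint k) (beta_integrable hb hcb)
        measurableSet_Ioo fun t ht => ?_
      have h1 : t ^ ((b + (k:ℝ)) - 1) ≤ t ^ (b - 1) :=
        Real.rpow_le_rpow_of_exponent_ge ht.1 (le_of_lt ht.2)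
          (by nlinarith [Nat.cast_nonneg (α := ℝ) k])
      exact mul_le_mul_of_nonneg_right h1
        (Real.rpow_nonneg (by linarith [ht.2] : (0:ℝ) ≤ 1 - t) _)
    have hIk0 : (0:ℝ) ≤ ∫ t in Set.Ioo (0:ℝ) 1, t ^ ((b + (k:ℝ)) - 1) * (1-t) ^ ((c-b) - 1) :=
      MeasureTheory.setIntegral_nonneg measurableSet_Ioo (hψnonneg k)
    have hcc : (0:ℝ) ≤ |pp a k| / (Nat.factorial k : ℝ) * x ^ k := by positivity
    exact mul_le_mul_of_nonneg_left hIk hcc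
  -- Step C
  have hC2 : ∀ t ∈ Set.Ioo (0:ℝ) 1,
      (∑' k, φ k t) = t ^ (b-1) * (1-t) ^ (c-b-1) * (1 - x*t) ^ (-a) := by
    intro t ht
    have hxt0 : (0:ℝ) ≤ x * t := le_of_lt (mul_pos hx0 ht.1)
    have hxt1 : x * t < 1 := by nlinarith [ht.2, ht.1]
    have hterm : ∀ k : ℕ, φ k t
        = (t ^ (b-1) * (1-t) ^ ((c-b)-1)) * (pp a k * (x*t) ^ k / (Nat.factorial k : ℝ)) := by
      intro k
      simp only [hφ]
      have ht' : t ^ ((b + (k:ℝ)) - 1) = t ^ (b - 1) * t ^ k := by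
        rw [← Real.rpow_natCast t k, ← Real.rpow_add ht.1]
        congr 1
        ring
      rw [ht', mul_pow]
      ring
    rw [tsum_congr hterm, tsum_mul_left]
    have : (∑' k : ℕ, pp a k * (x*t) ^ k / (Nat.factorial k : ℝ)) = gfun a (x*t) := rfl
    rw [this, gfun_eq a hxt0 hxt1]
  rw [hA, tsum_mul_left, hB, MeasureTheory.setIntegral_congr_fun measurableSet_Ioo hC2]

lemma Hyp_comm (a b c x : ℝ) : Hyp a b c x = Hyp b a c x := by
  rw [Hyp, Hyp]
  exact tsum_congr fun k => by ring

lemma Hyp_zero_left {a b c x : ℝ} (h : Real.Gamma a = 0) : Hyp a b c x = 0 := by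
  rw [Hyp]
  convert tsum_zero with k
  rw [Poch, h, div_zero]
  simp

lemma Hyp_bb {a c x : ℝ} (hc : 0 < c) (ha : ∀ m : ℕ, a ≠ -(m:ℝ)) :
    Hyp a c c x = gfun a x := by
  rw [Hyp, gfun]
  refine tsum_congr fun k => ?_
  have hP : Poch c k ≠ 0 := ne_of_gt (Poch_pos hc k)
  rw [Poch_eq_pp ha]
  field_simp
lemma integrable_repr {a b c x : ℝ} (ha0 : a ≤ 0) (hb : 0 < b) (hbc : b < c)
    (hx0 : 0 < x) (hx1 : x < 1) :
    MeasureTheory.IntegrableOn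
      (fun t : ℝ => t ^ (b-1) * (1-t) ^ (c-b-1) * (1 - x*t) ^ (-a)) (Set.Ioo 0 1) := by
  have hcb : 0 < c - b := by linarith
  have hmeas : MeasureTheory.AEStronglyMeasurable
      (fun t : ℝ => t ^ (b-1) * (1-t) ^ (c-b-1) * (1 - x*t) ^ (-a))
      (MeasureTheory.volume.restrict (Set.Ioo 0 1)) := by
    refine ContinuousOn.aestronglyMeasurable ?_ measurableSet_Ioo
    refine ContinuousOn.mul (ContinuousOn.mul ?_ ?_) ?_
    · exact continuousOn_id.rpow_const fun t ht => Or.inl (ne_of_gt ht.1)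
    · exact (continuousOn_const.sub continuousOn_id).rpow_const
        fun t ht => Or.inl (by intro h; simp only [Pi.sub_apply, id_eq] at h; nlinarith [ht.2])
    · refine (continuousOn_const.sub (continuousOn_const.mul continuousOn_id)).rpow_const
        fun t ht => Or.inl ?_
      intro h
      simp only [Pi.sub_apply, Pi.mul_apply, id_eq] at h
      nlinarith [ht.1, ht.2, hx0, hx1]
  refine MeasureTheory.Integrable.mono (beta_integrable hb hcb) hmeas ?_
  rw [MeasureTheory.ae_restrict_iff' measurableSet_Ioo]
  refine Filter.Eventually.of_forall fun t ht => ?_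
  have ht0 : (0:ℝ) < t := ht.1
  have ht1 : t < 1 := ht.2
  have hxt : x * t < 1 := by nlinarith
  have hxt0 : (0:ℝ) ≤ 1 - x * t := by linarith
  have hW : (0:ℝ) ≤ t ^ (b-1) * (1-t) ^ (c-b-1) :=
    mul_nonneg (Real.rpow_nonneg (le_of_lt ht0) _)
      (Real.rpow_nonneg (by linarith : (0:ℝ) ≤ 1 - t) _)
  have hR1 : (1 - x*t) ^ (-a) ≤ 1 :=
    Real.rpow_le_one hxt0 (by nlinarith) (by linarith)
  have hR0 : (0:ℝ) ≤ (1 - x*t) ^ (-a) := Real.rpow_nonneg hxt0 _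
  have : ‖t ^ (b-1) * (1-t) ^ (c-b-1) * (1 - x*t) ^ (-a)‖
      = t ^ (b-1) * (1-t) ^ (c-b-1) * (1 - x*t) ^ (-a) :=
    Real.norm_of_nonneg (mul_nonneg hW hR0)
  rw [this, Real.norm_eq_abs, abs_of_nonneg hW]
  nlinarith

lemma aux_main {a b c : ℝ} (hc : 0 < c) (ha0 : a ≤ 0) (hb0 : 0 ≤ b) (hbc : b ≤ c) :
    AntitoneOn (fun r => Hyp a b c r) (Set.Ioo (0:ℝ) 1) := by
  by_cases hga : Real.Gamma a = 0
  · intro x hx y hy hxy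
    simp only [Hyp_zero_left hga, le_refl]
  by_cases hgb : Real.Gamma b = 0
  · intro x hx y hy hxy
    simp only
    rw [Hyp_comm a b c x, Hyp_comm a b c y, Hyp_zero_left hgb, Hyp_zero_left hgb]
  have ha : ∀ m : ℕ, a ≠ -(m:ℝ) := fun m hm => hga ((Real.Gamma_eq_zero_iff a).mpr ⟨m, hm⟩)
  have ha' : a < 0 := lt_of_le_of_ne ha0 fun h => ha 0 (by simp [h])
  have hb : 0 < b := by
    rcases lt_or_eq_of_le hb0 with h | h
    · exact h
    · exact absurd (h ▸ Real.Gamma_zero) hgb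
  rcases eq_or_lt_of_le hbc with rfl | hbc'
  · intro x hx y hy hxy
    simp only
    rw [Hyp_bb hb ha, Hyp_bb hb ha, gfun_eq a (le_of_lt hx.1) hx.2,
      gfun_eq a (le_of_lt hy.1) hy.2]
    exact Real.rpow_le_rpow (by linarith [hy.2]) (by linarith) (by linarith)
  · intro x hx y hy hxy
    simp only
    rw [Hyp_repr ha hb hbc' hx.1 hx.2, Hyp_repr ha hb hbc' hy.1 hy.2]
    have hΓc := Real.Gamma_pos_of_pos hc
    have hΓb := Real.Gamma_pos_of_pos hb
    have hΓcb := Real.Gamma_pos_of_pos (show (0:ℝ) < c - b by linarith)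
    have hCpos : (0:ℝ) ≤ Real.Gamma c / (Real.Gamma b * Real.Gamma (c - b)) := by positivity
    refine mul_le_mul_of_nonneg_left ?_ hCpos
    refine MeasureTheory.setIntegral_mono_on
      (integrable_repr ha0 hb hbc' hy.1 hy.2)
      (integrable_repr ha0 hb hbc' hx.1 hx.2) measurableSet_Ioo fun t ht => ?_
    have hW : (0:ℝ) ≤ t ^ (b-1) * (1-t) ^ (c-b-1) :=
      mul_nonneg (Real.rpow_nonneg (le_of_lt ht.1) _)
        (Real.rpow_nonneg (by linarith [ht.2] : (0:ℝ) ≤ 1 - t) _)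
    refine mul_le_mul_of_nonneg_left ?_ hW
    refine Real.rpow_le_rpow ?_ ?_ (by linarith)
    · nlinarith [hy.2, ht.2, ht.1, hy.1]
    · nlinarith [ht.1]

theorem stmt2 (a b c : ℝ) (hc : 0 < c) (hac : a ≤ c) (hbc : b ≤ c) (hab : a * b ≤ 0) :
    AntitoneOn (fun r => Hyp a b c r) (Set.Ioo (0 : ℝ) 1) := by
  rcases mul_nonpos_iff.mp hab with ⟨ha1, hb1⟩ | ⟨ha1, hb1⟩
  · have h := aux_main (a := b) (b := a) hc hb1 ha1 hac
    intro x hx y hy hxy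
    have h2 := h hx hy hxy
    simp only at h2 ⊢
    rw [Hyp_comm a b c x, Hyp_comm a b c y]
    exact h2
  · exact aux_main hc ha1 hb1 hbc
end

section
/- Suppose c > 0, a ≤ c, b ≤ c, and ab ≥ 0. Then the function r ↦ F(a, b; c; r) is increasing on the interval (0, 1). -/
open Real

namespace HypAux

/-- The coefficient of `x^k` in the hypergeometric series. -/
noncomputable def coef (a b c : ℝ) (k : ℕ) : ℝ :=
  Poch a k * Poch b k / Poch c k / (Nat.factorial k : ℝ)

lemma hyp_eq (a b c x : ℝ) : Hyp a b c x = ∑' k, coef a b c k * x ^ k := by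
  unfold Hyp coef
  exact tsum_congr fun k => by ring

lemma hyp_comm (a b c x : ℝ) : Hyp a b c x = Hyp b a c x := by
  unfold Hyp
  exact tsum_congr fun k => by rw [mul_comm (Poch a k)]

lemma gamma_add_nat_ne_zero {a : ℝ} (ha : Real.Gamma a ≠ 0) (k : ℕ) :
    Real.Gamma (a + k) ≠ 0 := by
  intro h
  rw [Real.Gamma_eq_zero_iff] at h
  obtain ⟨m, hm⟩ := h
  exact ha (Real.Gamma_eq_zero_iff a |>.mpr ⟨m + k, by push_cast; linarith⟩)

lemma poch_zero_of_gamma {a : ℝ} (h : Real.Gamma a = 0) (k : ℕ) : Poch a k = 0 := by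
  unfold Poch; rw [h, div_zero]

lemma poch_ne_zero {a : ℝ} (ha : Real.Gamma a ≠ 0) (k : ℕ) : Poch a k ≠ 0 :=
  div_ne_zero (gamma_add_nat_ne_zero ha k) ha

lemma poch_pos {a : ℝ} (ha : 0 < a) (k : ℕ) : 0 < Poch a k :=
  div_pos (Real.Gamma_pos_of_pos (by positivity)) (Real.Gamma_pos_of_pos ha)

lemma poch_nonneg {a : ℝ} (ha : 0 ≤ a) (k : ℕ) : 0 ≤ Poch a k := by
  rcases eq_or_lt_of_le ha with h | h
  · rw [poch_zero_of_gamma (by rw [← h, Real.Gamma_zero]) k]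
  · exact (poch_pos h k).le

lemma poch_zero_nonneg (a : ℝ) : 0 ≤ Poch a 0 := by
  unfold Poch
  rcases eq_or_ne (Real.Gamma a) 0 with h | h
  · rw [h, div_zero]
  · rw [Nat.cast_zero, add_zero, div_self h]; norm_num

lemma poch_rec1 (a : ℝ) (k : ℕ) : Poch a (k + 1) = (a + k) * Poch a k := by
  unfold Poch
  by_cases h : Real.Gamma a = 0
  · rw [h, div_zero, div_zero, mul_zero]
  · have hak : a + (k : ℝ) ≠ 0 := by
      intro h0
      exact h (Real.Gamma_eq_zero_iff a |>.mpr ⟨k, by linarith⟩)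
    have h1 : a + ((k : ℕ) + 1 : ℕ) = (a + k) + 1 := by push_cast; ring
    rw [h1, Real.Gamma_add_one hak, mul_div_assoc]

lemma poch_rec2 (a : ℝ) (k : ℕ) : Poch a (k + 1) = a * Poch (a + 1) k := by
  by_cases h : Real.Gamma a = 0
  · rw [poch_zero_of_gamma h]
    rw [Real.Gamma_eq_zero_iff] at h
    obtain ⟨m, hm⟩ := h
    match m with
    | 0 => 
      have : a = 0 := by simpa using hm
      rw [this, zero_mul]
    | (m+1) =>
      have h2 : Real.Gamma (a + 1) = 0 := by
        rw [Real.Gamma_eq_zero_iff]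
        exact ⟨m, by push_cast at hm ⊢; linarith⟩
      rw [poch_zero_of_gamma h2, mul_zero]
  · have ha : a ≠ 0 := by rintro rfl; exact h Real.Gamma_zero
    unfold Poch
    have h1 : a + ((k : ℕ) + 1 : ℕ) = (a + 1) + k := by push_cast; ring
    rw [h1, Real.Gamma_add_one ha]
    field_simp

lemma poch_cross (a : ℝ) (k : ℕ) : a * Poch (a + 1) k = (a + k) * Poch a k := by
  rw [← poch_rec2, poch_rec1]

lemma factorial_cast_ne_zero (k : ℕ) : ((Nat.factorial k : ℝ)) ≠ 0 := by
  exact_mod_cast Nat.factorial_ne_zero k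

lemma gamma_pos_ne_zero {c : ℝ} (hc : 0 < c) : Real.Gamma c ≠ 0 :=
  (Real.Gamma_pos_of_pos hc).ne'

/-- `(k+1) * C_{k+1}(a,b,c) = (ab/c) * C_k(a+1,b+1,c+1)` -/
lemma coef_rec_deriv {c : ℝ} (hc : 0 < c) (a b : ℝ) (k : ℕ) :
    ((k : ℝ) + 1) * coef a b c (k + 1) = (a * b / c) * coef (a + 1) (b + 1) (c + 1) k := by
  unfold coef
  rw [poch_rec2 a, poch_rec2 b, poch_rec2 c, Nat.factorial_succ]
  have h1 : Poch (c + 1) k ≠ 0 := poch_ne_zero (gamma_pos_ne_zero (by linarith)) k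
  have h2 : ((Nat.factorial k : ℝ)) ≠ 0 := factorial_cast_ne_zero k
  have h3 : ((k : ℝ) + 1) ≠ 0 := by positivity
  push_cast
  field_simp

/-- `C_{k+1}(a,b,c) * ((c+k)(k+1)) = C_k(a,b,c) * ((a+k)(b+k))` -/
lemma coef_rec_ratio {c : ℝ} (hc : 0 < c) (a b : ℝ) (k : ℕ) :
    coef a b c (k + 1) * ((c + k) * ((k : ℝ) + 1)) = coef a b c k * ((a + k) * (b + k)) := by
  unfold coef
  rw [poch_rec1 a, poch_rec1 b, poch_rec1 c, Nat.factorial_succ]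
  have h1 : Poch c k ≠ 0 := poch_ne_zero (gamma_pos_ne_zero hc) k
  have h2 : ((Nat.factorial k : ℝ)) ≠ 0 := factorial_cast_ne_zero k
  have h3 : ((k : ℝ) + 1) ≠ 0 := by positivity
  have h4 : c + (k : ℝ) ≠ 0 := by positivity
  push_cast
  field_simp

/-- key coefficient identity:
`(k+1) C_{k+1}(a,b,c) - (b+k) C_k(a,b,c) = -(b(c-a)/c) C_k(a,b+1,c+1)` -/
lemma coef_phi {c : ℝ} (hc : 0 < c) (a b : ℝ) (k : ℕ) :
    ((k : ℝ) + 1) * coef a b c (k + 1) - (b + k) * coef a b c k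
      = -(b * (c - a) / c) * coef a (b + 1) (c + 1) k := by
  by_cases hb : b = 0
  · subst hb
    have hPb : Poch 0 k = 0 := poch_zero_of_gamma Real.Gamma_zero k
    have hPb1 : Poch 0 (k + 1) = 0 := poch_zero_of_gamma Real.Gamma_zero (k + 1)
    unfold coef
    rw [hPb, hPb1]
    simp
  · have hQb : Poch (b + 1) k = (b + k) * Poch b k / b := by
      rw [eq_div_iff hb, mul_comm, poch_cross]
    have hQc : Poch (c + 1) k = (c + k) * Poch c k / c := by
      rw [eq_div_iff hc.ne', mul_comm, poch_cross]
    unfold coef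
    rw [poch_rec1 a, poch_rec1 b, poch_rec1 c, Nat.factorial_succ, hQb, hQc]
    have h1 : Poch c k ≠ 0 := poch_ne_zero (gamma_pos_ne_zero hc) k
    have h2 : ((Nat.factorial k : ℝ)) ≠ 0 := factorial_cast_ne_zero k
    have h3 : ((k : ℝ) + 1) ≠ 0 := by positivity
    have h4 : c + (k : ℝ) ≠ 0 := by positivity
    push_cast
    field_simp
    ring

lemma summable_coef_abs (a b : ℝ) {c r : ℝ} (hc : 0 < c) (hr0 : 0 ≤ r) (hr1 : r < 1) :
    Summable (fun k => |coef a b c k| * r ^ k) := by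
  rcases eq_or_lt_of_le hr0 with h0 | h0
  · apply summable_of_ne_finset_zero (s := {0})
    intro k hk
    have : k ≠ 0 := by simpa using hk
    rw [← h0, zero_pow this, mul_zero]
  -- ratio test
  set l : ℝ := (1 + r) / 2 with hl
  have hrl : r < l := by rw [hl]; linarith
  have hl1 : l < 1 := by rw [hl]; linarith
  have hl0 : 0 < l := by rw [hl]; linarith
  set s : ℝ := Real.sqrt (l / r) with hs
  have hs2 : s * s = l / r := Real.mul_self_sqrt (by positivity)
  have hs1 : 1 < s := by
    have : (1 : ℝ) < l / r := (one_lt_div h0).mpr hrl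
    nlinarith [Real.sqrt_nonneg (l / r)]
  have hs0 : 0 < s := by linarith
  apply summable_of_ratio_norm_eventually_le hl1
  have hK : ∀ᶠ (k : ℕ) in Filter.atTop, |a| ≤ (s - 1) * k ∧ |b| ≤ (s - 1) * k := by
    have h1 : ∀ᶠ (k : ℕ) in Filter.atTop, (Nat.ceil (|a| / (s - 1)) : ℕ) ≤ k :=
      Filter.eventually_ge_atTop _
    have h2 : ∀ᶠ (k : ℕ) in Filter.atTop, (Nat.ceil (|b| / (s - 1)) : ℕ) ≤ k :=
      Filter.eventually_ge_atTop _
    filter_upwards [h1, h2] with k hk1 hk2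
    have hs' : 0 < s - 1 := by linarith
    constructor
    · have : |a| / (s - 1) ≤ (k : ℝ) := by
        calc |a| / (s - 1) ≤ (Nat.ceil (|a| / (s - 1)) : ℝ) := Nat.le_ceil _
        _ ≤ k := by exact_mod_cast hk1
      calc |a| = (|a| / (s - 1)) * (s - 1) := by field_simp
      _ ≤ (k : ℝ) * (s - 1) := by nlinarith
      _ = (s - 1) * k := by ring
    · have : |b| / (s - 1) ≤ (k : ℝ) := by
        calc |b| / (s - 1) ≤ (Nat.ceil (|b| / (s - 1)) : ℝ) := Nat.le_ceil _
        _ ≤ k := by exact_mod_cast hk2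
      calc |b| = (|b| / (s - 1)) * (s - 1) := by field_simp
      _ ≤ (k : ℝ) * (s - 1) := by nlinarith
      _ = (s - 1) * k := by ring
  filter_upwards [hK] with k ⟨hka, hkb⟩
  -- goal : ‖|coef a b c (k+1)| * r^(k+1)‖ ≤ l * ‖|coef a b c k| * r^k‖
  have hck : 0 ≤ |coef a b c k| * r ^ k := by positivity
  have hck1 : 0 ≤ |coef a b c (k + 1)| * r ^ (k + 1) := by positivity
  rw [Real.norm_of_nonneg hck1, Real.norm_of_nonneg hck]
  -- from coef_rec_ratio : |coef (k+1)| * ((c+k)(k+1)) = |coef k| * |a+k| * |b+k|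
  have hratio : |coef a b c (k + 1)| * ((c + k) * ((k : ℝ) + 1))
      = |coef a b c k| * (|a + k| * |b + k|) := by
    have := coef_rec_ratio hc a b k
    have h' := congrArg abs this
    simp only [abs_mul] at h'
    rwa [abs_of_pos (by positivity : (0:ℝ) < c + k), abs_of_pos (by positivity : (0:ℝ) < (k:ℝ) + 1)] at h'
  -- bound |a+k| ≤ s * (k+1), |b+k| ≤ s * (c+k)
  have hbnda : |a + (k : ℝ)| ≤ s * ((k : ℝ) + 1) := by
    calc |a + (k : ℝ)| ≤ |a| + k := by
          calc |a + (k:ℝ)| ≤ |a| + |(k:ℝ)| := abs_add_le _ _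
          _ = |a| + k := by rw [abs_of_nonneg (by positivity : (0:ℝ) ≤ (k:ℝ))]
    _ ≤ (s - 1) * k + k := by linarith
    _ = s * k := by ring
    _ ≤ s * ((k : ℝ) + 1) := by nlinarith
  have hbndb : |b + (k : ℝ)| ≤ s * (c + k) := by
    calc |b + (k : ℝ)| ≤ |b| + k := by
          calc |b + (k:ℝ)| ≤ |b| + |(k:ℝ)| := abs_add_le _ _
          _ = |b| + k := by rw [abs_of_nonneg (by positivity : (0:ℝ) ≤ (k:ℝ))]
    _ ≤ (s - 1) * k + k := by linarith
    _ = s * k := by ring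
    _ ≤ s * (c + k) := by nlinarith
  -- combine
  have hprod : |a + (k : ℝ)| * |b + (k : ℝ)| * r ≤ l * ((c + k) * ((k : ℝ) + 1)) := by
    have h1 : |a + (k : ℝ)| * |b + (k : ℝ)| ≤ (s * ((k : ℝ) + 1)) * (s * (c + k)) := by
      apply mul_le_mul hbnda hbndb (abs_nonneg _) (by positivity)
    have h2 : (s * ((k : ℝ) + 1)) * (s * (c + k)) * r = l * ((c + k) * ((k : ℝ) + 1)) := by
      have hssr : s * s * r = l := by rw [hs2]; field_simp
      linear_combination ((c + (k:ℝ)) * ((k:ℝ) + 1)) * hssr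
    calc |a + (k : ℝ)| * |b + (k : ℝ)| * r
        ≤ (s * ((k : ℝ) + 1)) * (s * (c + k)) * r :=
          mul_le_mul_of_nonneg_right h1 h0.le
      _ = l * ((c + k) * ((k : ℝ) + 1)) := h2
  have hckpos : (0:ℝ) < (c + k) * ((k : ℝ) + 1) := by positivity
  have key : |coef a b c (k + 1)| * ((c + k) * ((k : ℝ) + 1)) * r
      ≤ |coef a b c k| * (l * ((c + k) * ((k : ℝ) + 1))) := by
    rw [hratio]
    calc |coef a b c k| * (|a + k| * |b + k|) * r
        = |coef a b c k| * (|a + k| * |b + k| * r) := by ring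
      _ ≤ |coef a b c k| * (l * ((c + k) * ((k : ℝ) + 1))) := by
          apply mul_le_mul_of_nonneg_left hprod (abs_nonneg _)
  have : |coef a b c (k + 1)| * r ≤ l * |coef a b c k| := by
    apply le_of_mul_le_mul_left _ hckpos
    calc ((c + k) * ((k : ℝ) + 1)) * (|coef a b c (k + 1)| * r)
        = |coef a b c (k + 1)| * ((c + k) * ((k : ℝ) + 1)) * r := by ring
      _ ≤ |coef a b c k| * (l * ((c + k) * ((k : ℝ) + 1))) := key
      _ = ((c + k) * ((k : ℝ) + 1)) * (l * |coef a b c k|) := by ring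
  calc |coef a b c (k + 1)| * r ^ (k + 1)
      = (|coef a b c (k + 1)| * r) * r ^ k := by ring
    _ ≤ (l * |coef a b c k|) * r ^ k := by
        apply mul_le_mul_of_nonneg_right this (by positivity)
    _ = l * (|coef a b c k| * r ^ k) := by ring

lemma summable_coef_mul_pow (a b : ℝ) {c x : ℝ} (hc : 0 < c) (hx : |x| < 1) :
    Summable (fun k => coef a b c k * x ^ k) := by
  apply Summable.of_norm_bounded (summable_coef_abs a b hc (abs_nonneg x) hx)
  intro k
  rw [Real.norm_eq_abs, abs_mul, abs_pow]

lemma hasDerivAt_hyp (a b : ℝ) {c x : ℝ} (hc : 0 < c) (hx : |x| < 1) :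
    HasDerivAt (fun y => Hyp a b c y)
      (a * b / c * Hyp (a + 1) (b + 1) (c + 1) x) x := by
  set r : ℝ := (1 + |x|) / 2 with hrdef
  have hr0 : 0 < r := by have := abs_nonneg x; rw [hrdef]; linarith
  have hr1 : r < 1 := by rw [hrdef]; linarith
  have hxr : |x| < r := by rw [hrdef]; linarith
  set t : Set ℝ := Set.Ioo (-r) r with htdef
  set g : ℕ → ℝ → ℝ := fun n y => coef a b c n * y ^ n with hgdef
  set g' : ℕ → ℝ → ℝ := fun n y => coef a b c n * (n * y ^ (n - 1)) with hg'def
  set u : ℕ → ℝ := fun n => |coef a b c n| * (n * r ^ (n - 1)) with hudef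
  have hu : Summable u := by
    rw [← summable_nat_add_iff 1]
    have heq : (fun n => u (n + 1))
        = fun n => |a * b / c| * (|coef (a + 1) (b + 1) (c + 1) n| * r ^ n) := by
      funext n
      have h1 := coef_rec_deriv hc a b n
      have h2 := congrArg abs h1
      rw [abs_mul, abs_mul, abs_of_nonneg (by positivity : (0:ℝ) ≤ (n:ℝ) + 1)] at h2
      simp only [hudef, Nat.add_sub_cancel]
      push_cast
      calc |coef a b c (n + 1)| * (((n : ℝ) + 1) * r ^ n)
          = (((n : ℝ) + 1) * |coef a b c (n + 1)|) * r ^ n := by ring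
        _ = (|a * b / c| * |coef (a + 1) (b + 1) (c + 1) n|) * r ^ n := by rw [h2]
        _ = |a * b / c| * (|coef (a + 1) (b + 1) (c + 1) n| * r ^ n) := by ring
    rw [heq]
    exact (summable_coef_abs (a + 1) (b + 1) (by linarith : (0:ℝ) < c + 1) hr0.le hr1).mul_left _
  have hg : ∀ n y, y ∈ t → HasDerivAt (g n) (g' n y) y := by
    intro n y _
    exact (hasDerivAt_pow n y).const_mul (coef a b c n)
  have hg' : ∀ n y, y ∈ t → ‖g' n y‖ ≤ u n := by
    intro n y hy
    have hyr : |y| ≤ r := by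
      rw [abs_le]
      exact ⟨hy.1.le, hy.2.le⟩
    simp only [hg'def, hudef, Real.norm_eq_abs, abs_mul, abs_pow]
    rw [abs_of_nonneg (by positivity : (0:ℝ) ≤ (n:ℝ))]
    apply mul_le_mul_of_nonneg_left _ (abs_nonneg _)
    apply mul_le_mul_of_nonneg_left _ (by positivity : (0:ℝ) ≤ (n:ℝ))
    exact pow_le_pow_left₀ (abs_nonneg y) hyr _
  have hy0 : (0 : ℝ) ∈ t := by
    rw [htdef, Set.mem_Ioo]
    constructor <;> linarith
  have hg0 : Summable fun n => g n 0 := by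
    apply summable_of_ne_finset_zero (s := {0})
    intro n hn
    have : n ≠ 0 := by simpa using hn
    simp [hgdef, zero_pow this]
  have hxt : x ∈ t := by
    rw [htdef, Set.mem_Ioo, ← abs_lt]
    exact hxr
  have H := hasDerivAt_tsum_of_isPreconnected hu isOpen_Ioo
    ((convex_Ioo (-r) r).isPreconnected) hg hg' hy0 hg0 hxt
  have hfun : (fun z => ∑' n, g n z) = (fun y => Hyp a b c y) := by
    funext z
    rw [hyp_eq]
  have hsum' : Summable (fun n => g' n x) :=
    Summable.of_norm_bounded hu (fun n => hg' n x hxt)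
  have hval : ∑' n, g' n x = a * b / c * Hyp (a + 1) (b + 1) (c + 1) x := by
    rw [Summable.tsum_eq_zero_add hsum']
    have hzero : g' 0 x = 0 := by simp [hg'def]
    rw [hzero, zero_add]
    have : (fun n => g' (n + 1) x)
        = fun n => a * b / c * (coef (a + 1) (b + 1) (c + 1) n * x ^ n) := by
      funext n
      simp only [hg'def, Nat.add_sub_cancel]
      push_cast
      calc coef a b c (n + 1) * (((n:ℝ) + 1) * x ^ n)
          = (((n:ℝ) + 1) * coef a b c (n + 1)) * x ^ n := by ring
        _ = (a * b / c * coef (a + 1) (b + 1) (c + 1) n) * x ^ n := by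
            rw [coef_rec_deriv hc a b n]
        _ = a * b / c * (coef (a + 1) (b + 1) (c + 1) n * x ^ n) := by ring
    rw [this, tsum_mul_left, ← hyp_eq]
  rw [hfun, hval] at H
  exact H

/-- Key contiguous identity:
`-B·F(A,B;C;y) + (1-y)·F'(y) = -(B(C-A)/C)·F(A,B+1;C+1;y)`. -/
lemma key_identity (A B : ℝ) {C y : ℝ} (hC : 0 < C) (hy : |y| < 1) :
    -B * Hyp A B C y + (1 - y) * (A * B / C * Hyp (A + 1) (B + 1) (C + 1) y)
      = -(B * (C - A) / C) * Hyp A (B + 1) (C + 1) y := by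
  rw [hyp_eq, hyp_eq, hyp_eq]
  have hC1 : (0:ℝ) < C + 1 := by linarith
  have S1 : Summable (fun k => coef A B C k * y ^ k) := summable_coef_mul_pow A B hC hy
  have S2 : Summable (fun k => coef (A + 1) (B + 1) (C + 1) k * y ^ k) :=
    summable_coef_mul_pow (A + 1) (B + 1) hC1 hy
  set D : ℕ → ℝ := fun k => ((k : ℝ) + 1) * coef A B C (k + 1) with hDdef
  have hD : ∀ k, D k = A * B / C * coef (A + 1) (B + 1) (C + 1) k := by
    intro k; rw [hDdef]; exact coef_rec_deriv hC A B k
  have SD : Summable (fun k => D k * y ^ k) := by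
    have : (fun k => D k * y ^ k)
        = fun k => (A * B / C) * (coef (A + 1) (B + 1) (C + 1) k * y ^ k) := by
      funext k; rw [hD]; ring
    rw [this]; exact S2.mul_left _
  have hmid : A * B / C * (∑' k, coef (A + 1) (B + 1) (C + 1) k * y ^ k)
      = ∑' k, D k * y ^ k := by
    rw [← tsum_mul_left]
    exact tsum_congr fun k => by rw [hD]; ring
  set T : ℕ → ℝ := fun k => (k : ℝ) * coef A B C k * y ^ k with hTdef
  have hT1 : ∀ k, T (k + 1) = y * (D k * y ^ k) := by
    intro k
    rw [hTdef, hDdef]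
    push_cast
    ring
  have ST' : Summable (fun k => T (k + 1)) := by
    have : (fun k => T (k + 1)) = fun k => y * (D k * y ^ k) := funext hT1
    rw [this]; exact SD.mul_left y
  have ST : Summable T := (summable_nat_add_iff 1).mp ST'
  have hTsum : ∑' k, T k = y * ∑' k, D k * y ^ k := by
    rw [Summable.tsum_eq_zero_add ST]
    have h0 : T 0 = 0 := by rw [hTdef]; simp
    rw [h0, zero_add]
    have : (fun k => T (k + 1)) = fun k => y * (D k * y ^ k) := funext hT1
    rw [this, tsum_mul_left]
  rw [hmid]
  have e1 : -B * (∑' k, coef A B C k * y ^ k) = ∑' k, -B * (coef A B C k * y ^ k) :=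
    tsum_mul_left.symm
  have e2 : (1 - y) * (∑' k, D k * y ^ k) = (∑' k, D k * y ^ k) - ∑' k, T k := by
    rw [hTsum]; ring
  rw [e1, e2, ← Summable.tsum_sub SD ST, ← Summable.tsum_add (S1.mul_left (-B)) (SD.sub ST)]
  have e5 : ∀ k, -B * (coef A B C k * y ^ k) + (D k * y ^ k - T k)
      = -(B * (C - A) / C) * (coef A (B + 1) (C + 1) k * y ^ k) := by
    intro k
    have h := coef_phi hC A B k
    calc -B * (coef A B C k * y ^ k) + (D k * y ^ k - T k)
        = (((k : ℝ) + 1) * coef A B C (k + 1) - (B + k) * coef A B C k) * y ^ k := by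
          rw [hDdef, hTdef]; ring
      _ = -(B * (C - A) / C) * (coef A (B + 1) (C + 1) k * y ^ k) := by rw [h]; ring
  calc ∑' k, (-B * (coef A B C k * y ^ k) + (D k * y ^ k - T k))
      = ∑' k, -(B * (C - A) / C) * (coef A (B + 1) (C + 1) k * y ^ k) :=
        tsum_congr e5
    _ = -(B * (C - A) / C) * ∑' k, coef A (B + 1) (C + 1) k * y ^ k := tsum_mul_left

lemma hyp_nonneg_of_nonneg {A B C : ℝ} (hA : 0 ≤ A) (hB : 0 ≤ B) (hC : 0 < C) {x : ℝ}
    (hx : 0 ≤ x) : 0 ≤ Hyp A B C x := by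
  unfold Hyp
  apply tsum_nonneg
  intro k
  have h1 : 0 ≤ Poch A k * Poch B k := mul_nonneg (poch_nonneg hA k) (poch_nonneg hB k)
  have h2 : 0 ≤ Poch A k * Poch B k / Poch C k := div_nonneg h1 (poch_pos hC k).le
  have h3 : 0 ≤ Poch A k * Poch B k / Poch C k * x ^ k := mul_nonneg h2 (by positivity)
  exact div_nonneg h3 (by positivity)

lemma hyp_at_zero_nonneg (A B C : ℝ) : 0 ≤ Hyp A B C 0 := by
  have h0 : Hyp A B C 0 = coef A B C 0 := by
    rw [hyp_eq]
    rw [tsum_eq_single 0 (fun k hk => by simp [zero_pow hk])]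
    simp
  rw [h0]
  unfold coef
  have h1 : 0 ≤ Poch A 0 * Poch B 0 := mul_nonneg (poch_zero_nonneg A) (poch_zero_nonneg B)
  have h2 : 0 ≤ Poch A 0 * Poch B 0 / Poch C 0 := div_nonneg h1 (poch_zero_nonneg C)
  exact div_nonneg h2 (by positivity)

lemma pos_of_shift (A B : ℝ) {C x : ℝ} (hC : 0 < C) (hAC : A ≤ C) (hB : B < 0)
    (hx : x ∈ Set.Ioo (0:ℝ) 1)
    (IH : ∀ y ∈ Set.Ioo (0:ℝ) 1, 0 ≤ Hyp A (B + 1) (C + 1) y) :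
    0 ≤ Hyp A B C x := by
  obtain ⟨hx0, hx1⟩ := hx
  set φ : ℝ → ℝ := fun s => (1 - s) ^ B * Hyp A B C s with hφdef
  have hder : ∀ y ∈ Set.Icc (0:ℝ) x,
      HasDerivAt φ (-(B * (C - A) / C) * ((1 - y) ^ (B - 1) * Hyp A (B + 1) (C + 1) y)) y := by
    rintro y ⟨hy0, hyx⟩
    have hy1 : y < 1 := lt_of_le_of_lt hyx hx1
    have h1y : 0 < 1 - y := by linarith
    have hyabs : |y| < 1 := abs_lt.mpr ⟨by linarith, hy1⟩
    have hH := hasDerivAt_hyp A B hC hyabs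
    have hpow : HasDerivAt (fun s : ℝ => (1 - s) ^ B) (-(B * (1 - y) ^ (B - 1))) y := by
      have hinner : HasDerivAt (fun s : ℝ => 1 - s) (-1) y := by
        simpa using (hasDerivAt_id y).const_sub 1
      have houter := Real.hasDerivAt_rpow_const (x := 1 - y) (p := B) (Or.inl h1y.ne')
      have := houter.comp y hinner
      exact this.congr_deriv (by ring)
    have hprod := hpow.mul hH
    refine hprod.congr_deriv ?_
    have hsplit : (1 - y) ^ B = (1 - y) ^ (B - 1) * (1 - y) := by
      rw [← Real.rpow_add_one h1y.ne' (B - 1)]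
      norm_num
    have hkey := key_identity A B hC hyabs
    rw [hsplit]
    linear_combination ((1 - y) ^ (B - 1)) * hkey
  have hsub : Set.Icc (0:ℝ) x ⊆ Set.Icc (0:ℝ) x := le_refl _
  have hcont : ContinuousOn φ (Set.Icc 0 x) := fun y hy =>
    (hder y hy).continuousAt.continuousWithinAt
  have hIcc : interior (Set.Icc (0:ℝ) x) = Set.Ioo 0 x := interior_Icc
  have hmono : MonotoneOn φ (Set.Icc 0 x) := by
    apply monotoneOn_of_deriv_nonneg (convex_Icc 0 x) hcont
    · rw [hIcc]
      intro y hy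
      exact ((hder y (Set.Ioo_subset_Icc_self hy)).differentiableAt).differentiableWithinAt
    · rw [hIcc]
      intro y hy
      rw [(hder y (Set.Ioo_subset_Icc_self hy)).deriv]
      have h1y : 0 < 1 - y := by nlinarith [hy.2, hx1]
      apply mul_nonneg
      · have hB' : 0 ≤ -B := by linarith
        have : -(B * (C - A) / C) = (-B) * (C - A) / C := by ring
        rw [this]
        apply div_nonneg (mul_nonneg hB' (by linarith)) hC.le
      · apply mul_nonneg (Real.rpow_pos_of_pos h1y _).le
        exact IH y ⟨hy.1, lt_trans hy.2 hx1⟩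
  have h01 : φ 0 ≤ φ x := hmono ⟨le_refl 0, hx0.le⟩ ⟨hx0.le, le_refl x⟩ hx0.le
  have hφ0 : 0 ≤ φ 0 := by
    rw [hφdef]
    simp only [sub_zero, Real.one_rpow, one_mul]
    exact hyp_at_zero_nonneg A B C
  have hφx : 0 ≤ (1 - x) ^ B * Hyp A B C x := le_trans hφ0 h01
  have hpx : 0 < (1 - x) ^ B := Real.rpow_pos_of_pos (by linarith) B
  nlinarith [hφx, hpx]

lemma ceil_helper {t : ℝ} (ht : 0 < t) : Nat.ceil (t - 1) + 1 ≤ Nat.ceil t := by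
  rcases le_or_gt t 1 with h | h
  · have h1 : Nat.ceil (t - 1) = 0 := Nat.ceil_eq_zero.mpr (by linarith)
    have h2 : 1 ≤ Nat.ceil t := Nat.one_le_iff_ne_zero.mpr (Nat.ceil_pos.mpr ht).ne'
    omega
  · have h0 : (0:ℝ) ≤ t - 1 := by linarith
    have hlt : Nat.ceil (t - 1) < Nat.ceil t := by
      rw [Nat.lt_ceil]
      calc (Nat.ceil (t - 1) : ℝ) < (t - 1) + 1 := Nat.ceil_lt_add_one h0
        _ = t := by ring
    omega

lemma hyp_nonneg : ∀ (n : ℕ) (A B C : ℝ), Nat.ceil (-A) + Nat.ceil (-B) ≤ n → 0 < C →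
    A ≤ C → B ≤ C → ∀ x ∈ Set.Ioo (0:ℝ) 1, 0 ≤ Hyp A B C x := by
  intro n
  induction n with
  | zero =>
    intro A B C hn hC hAC hBC x hx
    have hA : 0 ≤ A := by
      have : Nat.ceil (-A) = 0 := by omega
      have := Nat.ceil_eq_zero.mp this
      linarith
    have hB : 0 ≤ B := by
      have : Nat.ceil (-B) = 0 := by omega
      have := Nat.ceil_eq_zero.mp this
      linarith
    exact hyp_nonneg_of_nonneg hA hB hC hx.1.le
  | succ n IH =>
    intro A B C hn hC hAC hBC x hx
    by_cases hB : B < 0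
    · apply pos_of_shift A B hC hAC hB hx
      intro y hy
      have hmeas : Nat.ceil (-A) + Nat.ceil (-(B + 1)) ≤ n := by
        have h1 : Nat.ceil (-(B + 1)) + 1 ≤ Nat.ceil (-B) := by
          have : -(B + 1) = -B - 1 := by ring
          rw [this]
          exact ceil_helper (by linarith)
        omega
      exact IH A (B + 1) (C + 1) hmeas (by linarith) (by linarith) (by linarith) y hy
    · by_cases hA : A < 0
      · rw [hyp_comm]
        apply pos_of_shift B A hC hBC hA hx
        intro y hy
        rw [hyp_comm]
        have hmeas : Nat.ceil (-(A + 1)) + Nat.ceil (-B) ≤ n := by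
          have h1 : Nat.ceil (-(A + 1)) + 1 ≤ Nat.ceil (-A) := by
            have : -(A + 1) = -A - 1 := by ring
            rw [this]
            exact ceil_helper (by linarith)
          omega
        exact IH (A + 1) B (C + 1) hmeas (by linarith) (by linarith) (by linarith) y hy
      · push_neg at hA hB
        exact hyp_nonneg_of_nonneg hA hB hC hx.1.le

end HypAux

theorem stmt3 (a b c : ℝ) (hc : 0 < c) (hac : a ≤ c) (hbc : b ≤ c) (hab : 0 ≤ a * b) :
    MonotoneOn (fun r => Hyp a b c r) (Set.Ioo (0 : ℝ) 1) := by
  have hder : ∀ y ∈ Set.Ioo (0:ℝ) 1,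
      HasDerivAt (fun r => Hyp a b c r) (a * b / c * Hyp (a + 1) (b + 1) (c + 1) y) y := by
    rintro y ⟨hy0, hy1⟩
    exact HypAux.hasDerivAt_hyp a b hc (abs_lt.mpr ⟨by linarith, hy1⟩)
  apply monotoneOn_of_deriv_nonneg (convex_Ioo 0 1)
  · exact fun y hy => (hder y hy).continuousAt.continuousWithinAt
  · rw [interior_Ioo]
    exact fun y hy => (hder y hy).differentiableAt.differentiableWithinAt
  · rw [interior_Ioo]
    intro y hy
    rw [(hder y hy).deriv]
    apply mul_nonneg (div_nonneg hab hc.le)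
    exact HypAux.hyp_nonneg (Nat.ceil (-(a+1)) + Nat.ceil (-(b+1))) (a + 1) (b + 1) (c + 1)
      le_rfl (by linarith) (by linarith) (by linarith) y hy
end
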